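/- arXiv:2202.00320 — 2 statements merged into one kernel-verified Lean document; each statement's English description precedes it below -/
import Mathlib

section
/- For a demand distribution whose support graph is a single directed star with root r (all requests are of the form (r, v_i) with probability p_i, sorted non-increasingly), the minimum possible weighted average path length over all networks with out-degree at most k at every node is achieved by a k-ary tree rooted at r in which nodes are placed in order of decreasing probability, and this optimum equals Σ_i p_i · depth(i), where depth(i) = ⌈log_k(i(k−1)/k + 1)⌉ is the depth of the i-th position in breadth-first order of the complete k-ary tree. In particular, for any out-degree-k network N, Σ_i p_i · dist_N(r, v_i) ≥ Σ_i p_i · (depth of the i-th slot in the complete k-ary tree). -/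
/-- `relPow E n a b` : there is a directed path of length exactly `n` from `a` to
`b` along the relation `E`. -/
def relPow {V : Type*} (E : V → V → Prop) : ℕ → V → V → Prop
  | 0 => Eq
  | n + 1 => fun a c => ∃ b, E a b ∧ relPow E n b c

/-- The depth of the `i`-th (1-indexed) non-root slot, in breadth-first order, of
the complete `k`-ary tree: `⌈log_k (i (k-1) / k + 1)⌉`. -/
noncomputable def slotDepth (k i : ℕ) : ℕ :=
  ⌈Real.logb k ((i : ℝ) * ((k : ℝ) - 1) / k + 1)⌉₊

/-- Number of non-root slots at depth ≤ d in the complete k-ary tree. -/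
def Sd (k d : ℕ) : ℕ := ∑ j ∈ Finset.Icc 1 d, k ^ j

lemma relPow_succ' {V : Type*} (E : V → V → Prop) (n : ℕ) (a c : V) :
    relPow E (n + 1) a c ↔ ∃ b, relPow E n a b ∧ E b c := by
  induction n generalizing a with
  | zero =>
    simp only [relPow]
    constructor
    · rintro ⟨b, hb, rfl⟩; exact ⟨a, rfl, hb⟩
    · rintro ⟨b, rfl, hb⟩; exact ⟨c, hb, rfl⟩
  | succ n ih =>
    constructor
    · rintro ⟨b, hab, hbc⟩
      obtain ⟨w, hw, hwc⟩ := (ih b).1 hbc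
      exact ⟨w, ⟨b, hab, hw⟩, hwc⟩
    · rintro ⟨w, ⟨b, hab, hbw⟩, hwc⟩
      exact ⟨b, hab, (ih b).2 ⟨w, hbw, hwc⟩⟩

lemma Sd_mul (k d : ℕ) :
    (Sd k d : ℝ) * ((k : ℝ) - 1) = (k : ℝ) ^ (d + 1) - k := by
  induction d with
  | zero => simp [Sd]
  | succ d ih =>
    have hstep : Sd k (d+1) = Sd k d + k ^ (d+1) :=
      Finset.sum_Icc_succ_top (by omega : 1 ≤ d + 1) _
    rw [hstep]
    push_cast
    linear_combination ih

lemma slotDepth_le_iff (k j d : ℕ) (hk : 2 ≤ k) :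
    slotDepth k j ≤ d ↔ j ≤ Sd k d := by
  have hk1 : (1 : ℝ) < (k : ℝ) := by exact_mod_cast hk.trans_lt' one_lt_two
  have hkpos : (0 : ℝ) < k := by linarith
  have hx : (0 : ℝ) < (j : ℝ) * ((k : ℝ) - 1) / k + 1 := by
    have : (0:ℝ) ≤ (j : ℝ) * ((k : ℝ) - 1) / k :=
      div_nonneg (mul_nonneg (Nat.cast_nonneg _) (by linarith)) (le_of_lt hkpos)
    linarith
  rw [slotDepth, Nat.ceil_le, Real.logb_le_iff_le_rpow hk1 hx,
    Real.rpow_natCast]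
  rw [div_add' _ _ _ (ne_of_gt hkpos), div_le_iff₀ hkpos]
  constructor
  · intro h
    have h2 : (j : ℝ) * ((k:ℝ) - 1) ≤ (Sd k d : ℝ) * ((k:ℝ) - 1) := by
      rw [Sd_mul k d]
      have : (k:ℝ)^d * k = (k:ℝ)^(d+1) := by ring
      nlinarith
    have := le_of_mul_le_mul_right h2 (by linarith : (0:ℝ) < (k:ℝ) - 1)
    exact_mod_cast this
  · intro h
    have h2 : (j : ℝ) ≤ (Sd k d : ℝ) := by exact_mod_cast h
    have := Sd_mul k d
    have hpow : (k:ℝ)^d * k = (k:ℝ)^(d+1) := by ring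
    nlinarith

/-- Rearrangement step: a set whose complement has at most `t` elements carries at
least as much probability as the tail `{i | t ≤ i}`, for antitone nonneg `p`. -/
lemma tail_sum_le {m : ℕ} (p : Fin m → ℝ) (hnn : ∀ i, 0 ≤ p i)
    (hmono : ∀ i j : Fin m, i ≤ j → p j ≤ p i) (t : ℕ) (A : Finset (Fin m))
    (hA : Aᶜ.card ≤ t) :
    ∑ i ∈ Finset.univ.filter (fun i : Fin m => t ≤ i.1), p i ≤ ∑ i ∈ A, p i := by
  classical
  set T := Finset.univ.filter (fun i : Fin m => t ≤ i.1) with hT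
  have hTA : ∑ i ∈ T ∩ A, p i + ∑ i ∈ T \ A, p i = ∑ i ∈ T, p i :=
    Finset.sum_inter_add_sum_sdiff T A p
  have hAT : ∑ i ∈ A ∩ T, p i + ∑ i ∈ A \ T, p i = ∑ i ∈ A, p i :=
    Finset.sum_inter_add_sum_sdiff A T p
  rw [Finset.inter_comm] at hAT
  have key : ∑ i ∈ T \ A, p i ≤ ∑ i ∈ A \ T, p i := by
    by_cases hm : m ≤ t
    · have hTe : T = ∅ := by
        ext i
        simp only [hT, Finset.mem_filter, Finset.mem_univ, true_and, Finset.notMem_empty,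
          iff_false]
        omega
      rw [hTe]
      simp only [Finset.empty_sdiff, Finset.sum_empty]
      exact Finset.sum_nonneg fun i _ => hnn i
    · push_neg at hm
      set c : Fin m := ⟨t, hm⟩ with hc
      have hcard : (T \ A).card ≤ (A \ T).card := by
        have e1 : (T ∩ A).card + (T \ A).card = T.card :=
          Finset.card_inter_add_card_sdiff T A
        have e2 : (T ∩ A).card + (A \ T).card = A.card := by
          rw [Finset.inter_comm]
          exact Finset.card_inter_add_card_sdiff A T
        have hAc : Aᶜ.card = m - A.card := by
          rw [Finset.card_compl, Fintype.card_fin]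
        have hAm : A.card ≤ m := by
          simpa using Finset.card_le_card (Finset.subset_univ A)
        -- T.card ≤ m - t  via  t ≤ Tᶜ.card
        have hTc : t ≤ Tᶜ.card := by
          have : (Finset.univ : Finset (Fin t)).card ≤ Tᶜ.card := by
            apply Finset.card_le_card_of_injOn (fun j : Fin t => ⟨j.1, j.2.trans hm⟩)
            · intro j _
              simp only [Finset.mem_coe, Finset.mem_compl, hT, Finset.mem_filter, Finset.mem_univ, true_and,
                not_le]
              exact j.2
            · intro a _ b _ hab
              exact Fin.ext (by simpa using congrArg Fin.val hab)
          simpa using this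
        have hTm : T.card + Tᶜ.card = m := by
          have := Finset.card_add_card_compl T
          simpa using this
        omega
      calc ∑ i ∈ T \ A, p i ≤ (T \ A).card • p c := by
            apply Finset.sum_le_card_nsmul
            intro i hi
            have : t ≤ i.1 := by
              have := (Finset.mem_sdiff.1 hi).1
              simpa [hT] using this
            exact hmono c i (by exact this)
        _ ≤ (A \ T).card • p c := by
            rw [nsmul_eq_mul, nsmul_eq_mul]
            exact mul_le_mul_of_nonneg_right (by exact_mod_cast hcard) (hnn c)
        _ ≤ ∑ i ∈ A \ T, p i := by
            apply Finset.card_nsmul_le_sum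
            intro i hi
            have : i.1 < t := by
              have := (Finset.mem_sdiff.1 hi).2
              simpa [hT, not_le] using this
            exact hmono i c (le_of_lt this)
  linarith [hTA, hAT, key]

/-- Star-demand lower bound.  All requests go from a root `r` to distinct
destinations `v 1, ..., v m` with probabilities `p 1 ≥ p 2 ≥ ... ≥ p m` summing
to 1.  In any directed network `N` (edge relation `E`) in which every vertex has
out-degree at most `k` (`k ≥ 2`), if `dist i` is the shortest directed path
length from `r` to `v i`, then the weighted average path length
`∑ i, p i * dist i` is at least `∑ i, p i * slotDepth k i`, the value achieved by
the complete `k`-ary tree rooted at `r` with nodes placed in order of decreasing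
probability. -/
theorem stmt9 {V : Type*} [Fintype V] (E : V → V → Prop) (k m : ℕ) (hk : 2 ≤ k)
    (r : V) (v : Fin m → V)
    (hvinj : Function.Injective v) (hvr : ∀ i, v i ≠ r)
    (hout : ∀ u : V, {w | E u w}.ncard ≤ k)
    (p : Fin m → ℝ)
    (hnn : ∀ i, 0 ≤ p i)
    (hmono : ∀ i j : Fin m, i ≤ j → p j ≤ p i)
    (hsum : ∑ i, p i = 1)
    (dist : Fin m → ℕ)
    (hdist : ∀ i, IsLeast {n : ℕ | relPow E n r (v i)} (dist i)) :
    ∑ i : Fin m, p i * (slotDepth k (i.1 + 1) : ℝ) ≤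
      ∑ i : Fin m, p i * (dist i : ℝ) := by
  classical
  -- layers of the BFS tree from r
  set L : ℕ → Finset V := fun d =>
    Finset.univ.filter (fun w => relPow E d r w ∧ ∀ j < d, ¬ relPow E j r w) with hLdef
  have houtF : ∀ u : V, (Finset.univ.filter (fun w => E u w)).card ≤ k := by
    intro u
    have h1 : {w | E u w} = ↑(Finset.univ.filter (fun w => E u w)) := by
      ext w; simp
    have := hout u
    rwa [h1, Set.ncard_coe_finset] at this
  have hL : ∀ d, (L d).card ≤ k ^ d := by
    intro d
    induction d with
    | zero =>
      have : L 0 ⊆ {r} := by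
        intro w hw
        simp only [hLdef, Finset.mem_filter, Finset.mem_univ, true_and] at hw
        have : r = w := hw.1
        simp [← this]
      simpa using Finset.card_le_card this
    | succ d ih =>
      have hsub : L (d + 1) ⊆ (L d).biUnion (fun b => Finset.univ.filter (fun w => E b w)) := by
        intro w hw
        simp only [hLdef, Finset.mem_filter, Finset.mem_univ, true_and] at hw
        obtain ⟨b, hb, hbw⟩ := (relPow_succ' E d r w).1 hw.1
        refine Finset.mem_biUnion.2 ⟨b, ?_, by simp [hbw]⟩
        simp only [hLdef, Finset.mem_filter, Finset.mem_univ, true_and]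
        refine ⟨hb, fun j hj hrel => ?_⟩
        exact hw.2 (j + 1) (by omega) ((relPow_succ' E j r w).2 ⟨b, hrel, hbw⟩)
      calc (L (d+1)).card ≤ ((L d).biUnion (fun b => Finset.univ.filter (fun w => E b w))).card :=
            Finset.card_le_card hsub
        _ ≤ ∑ b ∈ L d, (Finset.univ.filter (fun w => E b w)).card :=
            Finset.card_biUnion_le
        _ ≤ ∑ _b ∈ L d, k := Finset.sum_le_sum fun b _ => houtF b
        _ = (L d).card * k := by rw [Finset.sum_const, smul_eq_mul]
        _ ≤ k ^ d * k := Nat.mul_le_mul_right k ih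
        _ = k ^ (d + 1) := by ring
  -- dist i ≥ 1 and v i lies in layer dist i
  have hd1 : ∀ i, 1 ≤ dist i := by
    intro i
    rcases Nat.eq_zero_or_pos (dist i) with h | h
    · exfalso
      have := (hdist i).1
      rw [h] at this
      exact hvr i (this : r = v i).symm
    · exact h
  have hvL : ∀ i, v i ∈ L (dist i) := by
    intro i
    simp only [hLdef, Finset.mem_filter, Finset.mem_univ, true_and]
    exact ⟨(hdist i).1, fun j hj hrel => absurd ((hdist i).2 hrel) (by omega)⟩
  -- counting: few destinations are within distance d
  have hcount : ∀ d, (Finset.univ.filter (fun i : Fin m => dist i ≤ d)).card ≤ Sd k d := by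
    intro d
    have hmap : (Finset.univ.filter (fun i : Fin m => dist i ≤ d)).card ≤
        ((Finset.Icc 1 d).biUnion L).card := by
      apply Finset.card_le_card_of_injOn v
      · intro i hi
        simp only [Finset.mem_coe, Finset.mem_filter, Finset.mem_univ, true_and] at hi
        exact Finset.mem_biUnion.2 ⟨dist i, Finset.mem_Icc.2 ⟨hd1 i, hi⟩, hvL i⟩
      · exact fun a _ b _ hab => hvinj hab
    calc (Finset.univ.filter (fun i : Fin m => dist i ≤ d)).card
        ≤ ((Finset.Icc 1 d).biUnion L).card := hmap
      _ ≤ ∑ j ∈ Finset.Icc 1 d, (L j).card := Finset.card_biUnion_le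
      _ ≤ ∑ j ∈ Finset.Icc 1 d, k ^ j := Finset.sum_le_sum fun j _ => hL j
      _ = Sd k d := rfl
  -- summation swap
  set D : ℕ := (Finset.univ.sup (fun i : Fin m => max (dist i) (slotDepth k (i.1 + 1)))) + 1
    with hD
  have hswap : ∀ f : Fin m → ℕ, (∀ i, f i < D) →
      ∑ i : Fin m, p i * (f i : ℝ) =
        ∑ d ∈ Finset.range D, ∑ i ∈ Finset.univ.filter (fun i => d < f i), p i := by
    intro f hf
    have h1 : ∀ i : Fin m, p i * (f i : ℝ) =
        ∑ d ∈ Finset.range D, if d < f i then p i else 0 := by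
      intro i
      rw [← Finset.sum_filter]
      have : (Finset.range D).filter (fun d => d < f i) = Finset.range (f i) := by
        ext a
        simp only [Finset.mem_filter, Finset.mem_range]
        constructor
        · exact fun h => h.2
        · exact fun h => ⟨h.trans (hf i), h⟩
      rw [this, Finset.sum_const, Finset.card_range, nsmul_eq_mul, mul_comm]
    rw [Finset.sum_congr rfl (fun i _ => h1 i), Finset.sum_comm]
    exact Finset.sum_congr rfl fun d _ => (Finset.sum_filter _ _).symm
  have hsupD : ∀ i : Fin m, max (dist i) (slotDepth k (i.1 + 1)) ≤ D - 1 := by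
    intro i
    have := Finset.le_sup (f := fun i : Fin m => max (dist i) (slotDepth k (i.1 + 1)))
      (Finset.mem_univ i)
    simpa [hD] using this
  have hdistD : ∀ i, dist i < D := by
    intro i
    have := hsupD i
    omega
  have hslotD : ∀ i : Fin m, slotDepth k (i.1 + 1) < D := by
    intro i
    have := hsupD i
    omega
  rw [hswap _ hslotD, hswap _ hdistD]
  apply Finset.sum_le_sum
  intro d _
  -- the slot-side set is exactly a tail
  have hset : Finset.univ.filter (fun i : Fin m => d < slotDepth k (i.1 + 1)) =
      Finset.univ.filter (fun i : Fin m => min m (Sd k d) ≤ i.1) := by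
    ext i
    simp only [Finset.mem_filter, Finset.mem_univ, true_and]
    rw [← not_le, slotDepth_le_iff k (i.1 + 1) d hk]
    have := i.2
    omega
  rw [hset]
  apply tail_sum_le p hnn hmono
  -- complement of {d < dist i} is {dist i ≤ d}, which is small
  have hcompl : (Finset.univ.filter (fun i : Fin m => d < dist i))ᶜ =
      Finset.univ.filter (fun i : Fin m => dist i ≤ d) := by
    ext i
    simp [not_lt]
  rw [hcompl]
  have hcm : (Finset.univ.filter (fun i : Fin m => dist i ≤ d)).card ≤ m := by
    simpa using Finset.card_filter_le Finset.univ (fun i : Fin m => dist i ≤ d)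
  exact le_min hcm (hcount d)
end

section
/- Greedy matching 1/2-approximation: in a finite weighted graph with positive edge weights, the matching produced by the greedy algorithm (repeatedly selecting the heaviest edge not conflicting with previously chosen edges) has total weight at least half the weight of a maximum-weight matching. -/
/-- Two undirected edges (elements of `Sym2 V`) conflict if they share a vertex. -/
def SharesVertex {V : Type*} (e f : Sym2 V) : Prop := ∃ a : V, a ∈ e ∧ a ∈ f

-- The greedy matching algorithm: process the edges in the given order
-- (heaviest first), keeping each edge iff it conflicts with no previously kept
-- edge.  `acc` is the list of edges kept so far.
open Classical in
noncomputable def greedyAux {V : Type*} (acc : List (Sym2 V)) :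
    List (Sym2 V) → List (Sym2 V)
  | [] => acc.reverse
  | e :: rest =>
      if ∀ f ∈ acc, ¬ SharesVertex e f then greedyAux (e :: acc) rest
      else greedyAux acc rest

/-- The matching produced by the greedy algorithm on the edge list `E`. -/
noncomputable def greedyMatching {V : Type*} (E : List (Sym2 V)) : List (Sym2 V) :=
  greedyAux [] E

lemma sharesVertex_self {V : Type*} (e : Sym2 V) : SharesVertex e e :=
  ⟨e.out.1, Sym2.out_fst_mem e, Sym2.out_fst_mem e⟩

lemma sharesVertex_symm {V : Type*} {e f : Sym2 V} (h : SharesVertex e f) :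
    SharesVertex f e := by obtain ⟨a, h1, h2⟩ := h; exact ⟨a, h2, h1⟩

lemma greedyAux_acc_mem {V : Type*} (l : List (Sym2 V)) :
    ∀ (acc : List (Sym2 V)), ∀ f ∈ acc, f ∈ greedyAux acc l := by
  induction l with
  | nil => intro acc f hf; simpa [greedyAux] using hf
  | cons e rest ih =>
      intro acc f hf
      rw [greedyAux]
      split
      · exact ih (e :: acc) f (List.mem_cons_of_mem _ hf)
      · exact ih acc f hf

lemma greedyAux_mem {V : Type*} (l : List (Sym2 V)) :
    ∀ (acc : List (Sym2 V)), ∀ g ∈ greedyAux acc l, g ∈ acc ∨ g ∈ l := by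
  induction l with
  | nil => intro acc g hg; left; simpa [greedyAux] using hg
  | cons e rest ih =>
      intro acc g hg
      rw [greedyAux] at hg
      split at hg
      · rcases ih (e :: acc) g hg with h | h
        · rcases List.mem_cons.mp h with h | h
          · exact Or.inr (h ▸ (List.mem_cons_self : e ∈ e :: rest))
          · exact Or.inl h
        · exact Or.inr (List.mem_cons_of_mem _ h)
      · rcases ih acc g hg with h | h
        · exact Or.inl h
        · exact Or.inr (List.mem_cons_of_mem _ h)

lemma greedyAux_pairwise {V : Type*} (l : List (Sym2 V)) :
    ∀ (acc : List (Sym2 V)), acc.Pairwise (fun e f => ¬ SharesVertex e f) →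
    (greedyAux acc l).Pairwise (fun e f => ¬ SharesVertex e f) := by
  induction l with
  | nil =>
      intro acc hacc
      rw [greedyAux, List.pairwise_reverse]
      exact hacc.imp fun h hs => h (sharesVertex_symm hs)
  | cons e rest ih =>
      intro acc hacc
      rw [greedyAux]
      split
      · rename_i hcond
        exact ih (e :: acc) (List.pairwise_cons.mpr ⟨hcond, hacc⟩)
      · exact ih acc hacc

lemma greedyAux_charge {V : Type*} (w : Sym2 V → ℝ) (l : List (Sym2 V)) :
    ∀ (acc : List (Sym2 V)),
    l.Pairwise (fun e f => w f ≤ w e) →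
    (∀ f ∈ acc, ∀ e ∈ l, w e ≤ w f) →
    ∀ e ∈ l, ∃ g ∈ greedyAux acc l, SharesVertex e g ∧ w e ≤ w g := by
  induction l with
  | nil => intro acc _ _ e he; exact absurd he List.not_mem_nil
  | cons a rest ih =>
      intro acc hsort hdom e he
      have hsort' : rest.Pairwise (fun e f => w f ≤ w e) := hsort.of_cons
      rw [greedyAux]
      split
      · rename_i hcond
        have hdom' : ∀ f ∈ (a :: acc), ∀ x ∈ rest, w x ≤ w f := by
          intro f hf x hx
          rcases List.mem_cons.mp hf with rfl | hf
          · exact (List.pairwise_cons.mp hsort).1 x hx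
          · exact hdom f hf x (List.mem_cons_of_mem _ hx)
        rcases List.mem_cons.mp he with rfl | he
        · exact ⟨e, greedyAux_acc_mem rest (e :: acc) e List.mem_cons_self,
            sharesVertex_self e, le_refl _⟩
        · exact ih (a :: acc) hsort' hdom' e he
      · rename_i hcond
        push_neg at hcond
        obtain ⟨f, hf, hsh⟩ := hcond
        have hdom' : ∀ g ∈ acc, ∀ x ∈ rest, w x ≤ w g := fun g hg x hx =>
          hdom g hg x (List.mem_cons_of_mem _ hx)
        rcases List.mem_cons.mp he with rfl | he
        · exact ⟨f, greedyAux_acc_mem rest acc f hf, hsh, hdom f hf e List.mem_cons_self⟩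
        · exact ih acc hsort' hdom' e he


/-- Greedy matching is a 1/2-approximation: in a finite weighted graph with
positive edge weights and no self-loops, whose edges `E` are listed in
non-increasing order of weight, the matching produced by the greedy algorithm
(repeatedly selecting the heaviest edge not conflicting with previously chosen
edges) has total weight at least half the weight of any matching `M` (a
duplicate-free set of pairwise non-adjacent edges of the graph); in particular,
at least half the weight of a maximum-weight matching. -/
theorem stmt13 {V : Type*} [Fintype V] (E : List (Sym2 V)) (w : Sym2 V → ℝ)
    (hpos : ∀ e ∈ E, 0 < w e)
    (hloop : ∀ e ∈ E, ¬ e.IsDiag)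
    (hsorted : E.Pairwise (fun e f => w f ≤ w e))
    (M : List (Sym2 V))
    (hME : ∀ e ∈ M, e ∈ E)
    (hMnd : M.Nodup)
    (hMmatch : M.Pairwise (fun e f => ¬ SharesVertex e f)) :
    (M.map w).sum ≤ 2 * ((greedyMatching E).map w).sum := by
  classical
  set G := greedyMatching E with hGdef
  have hGsub : ∀ g ∈ G, g ∈ E := by
    intro g hg
    rcases greedyAux_mem E [] g hg with h | h
    · exact absurd h List.not_mem_nil
    · exact h
  have hGpos : ∀ g ∈ G, 0 < w g := fun g hg => hpos g (hGsub g hg)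
  have hGpair : G.Pairwise (fun e f => ¬ SharesVertex e f) :=
    greedyAux_pairwise E [] List.Pairwise.nil
  have hGnd : G.Nodup := hGpair.imp fun h => by rintro rfl; exact h (sharesVertex_self _)
  have hch : ∀ e ∈ M, ∃ g ∈ G, SharesVertex e g ∧ w e ≤ w g := fun e he =>
    greedyAux_charge w E [] hsorted (by simp) e (hME e he)
  -- choice function
  let c : Sym2 V → Sym2 V := fun e =>
    if h : ∃ g ∈ G, SharesVertex e g ∧ w e ≤ w g then h.choose else e
  have hc : ∀ e ∈ M, c e ∈ G ∧ SharesVertex e (c e) ∧ w e ≤ w (c e) := by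
    intro e he
    have h := hch e he
    simp only [c, dif_pos h]
    exact ⟨h.choose_spec.1, h.choose_spec.2⟩
  -- M pairwise disjoint, symmetric version
  have hM' : ∀ a ∈ M, ∀ b ∈ M, a ≠ b → ¬ SharesVertex a b := by
    intro a ha b hb hne
    have hsym : Symmetric (fun e f : Sym2 V => ¬ SharesVertex e f) :=
      fun a b h hs => h (sharesVertex_symm hs)
    haveI : Std.Symm (fun e f : Sym2 V => ¬ SharesVertex e f) := ⟨fun a b h => hsym h⟩
    exact hMmatch.forall ha hb hne
  have hMsum : (M.map w).sum = ∑ e ∈ M.toFinset, w e := (List.sum_toFinset w hMnd).symm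
  have hGsum : (G.map w).sum = ∑ g ∈ G.toFinset, w g := (List.sum_toFinset w hGnd).symm
  rw [hMsum, hGsum]
  have hmaps : ∀ e ∈ M.toFinset, c e ∈ G.toFinset := fun e he =>
    List.mem_toFinset.mpr (hc e (List.mem_toFinset.mp he)).1
  have hfiber : ∀ g ∈ G.toFinset,
      ∑ e ∈ M.toFinset.filter (fun e => c e = g), w (c e) ≤ 2 * w g := by
    intro g hg
    have hwg : 0 < w g := hGpos g (List.mem_toFinset.mp hg)
    set F := M.toFinset.filter (fun e => c e = g) with hF
    obtain ⟨x, y, hxy⟩ : ∃ x y : V, ∀ v, v ∈ g → v = x ∨ v = y := by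
      induction g using Sym2.ind with
      | _ x y => exact ⟨x, y, fun v hv => Sym2.mem_iff.mp hv⟩
    let φ : Sym2 V → V := fun e => if h : SharesVertex e g then h.choose else x
    have hφ : ∀ e ∈ F, φ e ∈ e ∧ φ e ∈ g := by
      intro e he
      have hce : c e = g := (Finset.mem_filter.mp he).2
      have hsh : SharesVertex e g := hce ▸ (hc e (List.mem_toFinset.mp
        (Finset.mem_filter.mp he).1)).2.1
      simp only [φ, dif_pos hsh]
      exact hsh.choose_spec
    have hcard : F.card ≤ 2 := by
      have h1 : F.card ≤ ({x, y} : Finset V).card := by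
        apply Finset.card_le_card_of_injOn φ
        · intro e he
          rcases hxy _ (hφ e he).2 with h | h <;> simp [h]
        · intro e he e' he' heq
          by_contra hne
          have heM : e ∈ M := List.mem_toFinset.mp (Finset.mem_filter.mp he).1
          have heM' : e' ∈ M := List.mem_toFinset.mp (Finset.mem_filter.mp he').1
          exact hM' e heM e' heM' hne ⟨φ e, (hφ e he).1, heq ▸ (hφ e' he').1⟩
      calc F.card ≤ ({x, y} : Finset V).card := h1
        _ ≤ ({y} : Finset V).card + 1 := Finset.card_insert_le x {y}
        _ ≤ 2 := by simp
    calc ∑ e ∈ F, w (c e) = ∑ e ∈ F, w g :=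
          Finset.sum_congr rfl fun e he => by rw [(Finset.mem_filter.mp he).2]
      _ = F.card * w g := by rw [Finset.sum_const, nsmul_eq_mul]
      _ ≤ 2 * w g := by
          apply mul_le_mul_of_nonneg_right _ hwg.le
          exact_mod_cast hcard
  calc ∑ e ∈ M.toFinset, w e
      ≤ ∑ e ∈ M.toFinset, w (c e) :=
        Finset.sum_le_sum fun e he => (hc e (List.mem_toFinset.mp he)).2.2
    _ = ∑ g ∈ G.toFinset, ∑ e ∈ M.toFinset.filter (fun e => c e = g), w (c e) :=
        (Finset.sum_fiberwise_of_maps_to hmaps _).symm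
    _ ≤ ∑ g ∈ G.toFinset, 2 * w g := Finset.sum_le_sum hfiber
    _ = 2 * ∑ g ∈ G.toFinset, w g := by rw [Finset.mul_sum]
end
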